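/- Let V be a vector space over a field and W a subspace of V. The monoid L̄(V,W) is unit-regular if and only if both of the following hold: (i) W is trivial, i.e. W = {0} or W = V; (ii) V is finite-dimensional. -/

import Mathlib

/-- An element `s` of a monoid is unit-regular if `s * u * s = s` for some unit `u`. -/
def IsUnitRegular {M : Type*} [Monoid M] (s : M) : Prop :=
  ∃ u : Mˣ, s * (↑u : M) * s = s

/-- The monoid `L̄(V, W)` of all linear self-maps of `V` leaving the subspace `W` invariant. -/
def Lbar (K V : Type*) [Field K] [AddCommGroup V] [Module K V] (W : Submodule K V) :
    Submonoid (Module.End K V) where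
  carrier := {f | ∀ w ∈ W, f w ∈ W}
  one_mem' := fun w hw => hw
  mul_mem' := fun {f g} hf hg w hw => hf _ (hg w hw)

open Module LinearMap

section Aux

variable {K V : Type*} [Field K] [AddCommGroup V] [Module K V]

lemma mem_Lbar_of_trivial {W : Submodule K V} (hW : W = ⊥ ∨ W = ⊤)
    (f : Module.End K V) : f ∈ Lbar K V W := by
  rcases hW with h | h <;> subst h <;> intro w hw
  · rw [Submodule.mem_bot] at hw ⊢; rw [hw, map_zero]
  · trivial

/-- Key surgery lemma: in finite dimensions every endomorphism is unit-regular. -/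
lemma exists_equiv_comp [FiniteDimensional K V] (f : Module.End K V) :
    ∃ e : V ≃ₗ[K] V, ∀ x, f (e (f x)) = f x := by
  obtain ⟨C, hC⟩ := Submodule.exists_isCompl (LinearMap.ker f)
  obtain ⟨D, hD⟩ := Submodule.exists_isCompl (LinearMap.range f)
  set g : C →ₗ[K] V := f ∘ₗ C.subtype with hgdef
  have hginj : Function.Injective g := by
    rw [← LinearMap.ker_eq_bot]
    rw [Submodule.eq_bot_iff]
    intro c hc
    have h1 : (c : V) ∈ LinearMap.ker f := by
      simpa [hgdef, LinearMap.mem_ker] using hc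
    have h2 : (c : V) = 0 := by
      have := Submodule.disjoint_def.mp hC.disjoint _ h1 c.2
      exact this
    exact Subtype.ext h2
  have hgrange : LinearMap.range g = LinearMap.range f := by
    apply le_antisymm
    · rintro _ ⟨c, rfl⟩
      exact ⟨(c : V), rfl⟩
    · rintro _ ⟨x, rfl⟩
      have hx : x ∈ (LinearMap.ker f) ⊔ C := by
        rw [hC.sup_eq_top]; trivial
      obtain ⟨k, hk, c, hcC, rfl⟩ := Submodule.mem_sup.mp hx
      refine ⟨⟨c, hcC⟩, ?_⟩
      simp [hgdef, map_add, LinearMap.mem_ker.mp hk]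
  let ψ : (LinearMap.range f) ≃ₗ[K] C :=
    ((LinearEquiv.ofInjective g hginj).trans
      (LinearEquiv.ofEq _ _ hgrange)).symm
  have hψ : ∀ y : LinearMap.range f, f (ψ y : V) = (y : V) := by
    intro y
    have h1 : ((ψ.symm (ψ y) : LinearMap.range f) : V) = g (ψ y) := by
      show (((LinearEquiv.ofInjective g hginj).trans
        (LinearEquiv.ofEq _ _ hgrange)) (ψ y) : V) = g (ψ y)
      simp
    rw [ψ.symm_apply_apply] at h1
    exact h1.symm
  have hdim : finrank K D = finrank K (LinearMap.ker f) := by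
    have h1 := Submodule.finrank_add_eq_of_isCompl hD
    have h2 := Submodule.finrank_add_eq_of_isCompl hC
    have h3 := LinearMap.finrank_range_add_finrank_ker f
    omega
  let θ : D ≃ₗ[K] (LinearMap.ker f) := LinearEquiv.ofFinrankEq _ _ hdim
  let e : V ≃ₗ[K] V :=
    ((Submodule.prodEquivOfIsCompl _ D hD).symm).trans
      ((ψ.prodCongr θ).trans (Submodule.prodEquivOfIsCompl C (LinearMap.ker f) hC.symm))
  refine ⟨e, fun x => ?_⟩
  set p : ↥(LinearMap.range f) := ⟨f x, LinearMap.mem_range_self f x⟩ with hp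
  have h0 : (Submodule.prodEquivOfIsCompl (LinearMap.range f) D hD).symm (f x) = (p, 0) :=
    Submodule.prodEquivOfIsCompl_symm_apply_left _ _ hD p
  have h1 : e (f x) = (ψ p : V) := by
    show (Submodule.prodEquivOfIsCompl C (LinearMap.ker f) hC.symm)
        ((ψ.prodCongr θ) ((Submodule.prodEquivOfIsCompl _ D hD).symm (f x))) = _
    rw [h0]
    simp [LinearEquiv.prodCongr_apply, Submodule.coe_prodEquivOfIsCompl']
  rw [h1]
  exact hψ p

end Aux

theorem stmt13 {K V : Type*} [Field K] [AddCommGroup V] [Module K V]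
    (W : Submodule K V) :
    (∀ f : Lbar K V W, IsUnitRegular f) ↔
      ((W = ⊥ ∨ W = ⊤) ∧ FiniteDimensional K V) := by
  classical
  constructor
  · intro H
    have hWtriv : W = ⊥ ∨ W = ⊤ := by
      by_contra hcon
      push_neg at hcon
      obtain ⟨hbot, htop⟩ := hcon
      obtain ⟨w, hwW, hw0⟩ := Submodule.exists_mem_ne_zero_of_ne_bot hbot
      obtain ⟨v, hv⟩ : ∃ v : V, v ∉ W := by
        by_contra hall
        push_neg at hall
        exact htop (Submodule.eq_top_iff'.mpr hall)
      have hmkv : (Submodule.Quotient.mk v : V ⧸ W) ≠ 0 := by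
        simpa [Submodule.Quotient.mk_eq_zero] using hv
      have hexφ : ¬ (∀ φ : Module.Dual K (V ⧸ W), φ (Submodule.Quotient.mk v) = 0) := by
        rw [Module.forall_dual_apply_eq_zero_iff]
        exact hmkv
      push_neg at hexφ
      obtain ⟨φ', hφ'⟩ := hexφ
      set c : K := φ' (Submodule.Quotient.mk v) with hc
      set φ : V →ₗ[K] K := (c⁻¹ • φ') ∘ₗ W.mkQ with hφdef
      have hφv : φ v = 1 := by
        simp only [hφdef, LinearMap.comp_apply, LinearMap.smul_apply, smul_eq_mul,
          Submodule.mkQ_apply]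
        exact inv_mul_cancel₀ hφ'
      have hφW : ∀ x ∈ W, φ x = 0 := by
        intro x hx
        simp [hφdef, (Submodule.Quotient.mk_eq_zero W).mpr hx]
      set fE : Module.End K V := LinearMap.smulRight φ w with hfE
      have hfmem : fE ∈ Lbar K V W := by
        intro x hx
        have : fE x = 0 := by simp [hfE, hφW x hx]
        rw [this]; exact W.zero_mem
      obtain ⟨u, hu⟩ := H ⟨fE, hfmem⟩
      have hu' : (fE * ((u : Lbar K V W) : Module.End K V) * fE) = fE :=
        congrArg Subtype.val hu
      have hvv := congrFun (congrArg DFunLike.coe hu') v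
      have hfEv : fE v = w := by simp [hfE, hφv]
      have huw : ((u : Lbar K V W) : Module.End K V) w ∈ W :=
        (u : Lbar K V W).2 w hwW
      rw [Module.End.mul_apply, Module.End.mul_apply, hfEv] at hvv
      have : fE (((u : Lbar K V W) : Module.End K V) w) = 0 := by
        simp [hfE, hφW _ huw]
      rw [this] at hvv
      exact hw0 hvv.symm
    have hfd : FiniteDimensional K V := by
      by_contra hinf
      set b := Basis.ofVectorSpace K V with hb
      have hι : Infinite (Basis.ofVectorSpaceIndex K V) := by
        by_contra hfin
        rw [not_infinite_iff_finite] at hfin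
        exact hinf (Module.Finite.of_basis b)
      set en := Infinite.natEmbedding (Basis.ofVectorSpaceIndex K V) with hen
      set j : Basis.ofVectorSpaceIndex K V → Basis.ofVectorSpaceIndex K V :=
        fun x => if h : ∃ n, en n = x then en (Nat.find h + 1) else x with hj
      have hjr : ∀ x, (∃ n, en n = x) → ∃ n, en n = j x := by
        intro x h
        refine ⟨Nat.find h + 1, ?_⟩
        simp [hj, dif_pos h]
      have hjnr : ∀ x, ¬(∃ n, en n = x) → j x = x := by
        intro x h; simp [hj, dif_neg h]
      have hjinj : Function.Injective j := by
        intro a b hab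
        by_cases ha : ∃ n, en n = a <;> by_cases hb' : ∃ n, en n = b
        · rw [hj] at hab
          simp only [dif_pos ha, dif_pos hb'] at hab
          have := en.injective hab
          have h2 : Nat.find ha = Nat.find hb' := by omega
          rw [← Nat.find_spec ha, ← Nat.find_spec hb', h2]
        · exfalso
          obtain ⟨n, hn⟩ := hjr a ha
          rw [hab, hjnr b hb'] at hn
          exact hb' ⟨n, hn⟩
        · exfalso
          obtain ⟨n, hn⟩ := hjr b hb'
          rw [← hab, hjnr a ha] at hn
          exact ha ⟨n, hn⟩
        · rwa [hjnr a ha, hjnr b hb'] at hab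
      have hi0 : en 0 ∉ Set.range j := by
        rintro ⟨a, ha⟩
        by_cases h : ∃ n, en n = a
        · rw [hj] at ha
          simp only [dif_pos h] at ha
          have := en.injective ha
          omega
        · rw [hjnr a h] at ha
          exact h ⟨0, ha.symm⟩
      set fE : Module.End K V := b.constr K (fun i => b (j i)) with hfE
      have hli : LinearIndependent K (fun i => b (j i)) :=
        b.linearIndependent.comp j hjinj
      have hfinj : Function.Injective fE := by
        rw [← LinearMap.ker_eq_bot, Submodule.eq_bot_iff]
        intro x hx
        rw [LinearMap.mem_ker] at hx
        rw [hfE, Basis.constr_apply] at hx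
        have hx' : Finsupp.linearCombination K (fun i => b (j i)) (b.repr x) = 0 := by
          rw [Finsupp.linearCombination_apply]; exact hx
        have : b.repr x = 0 := by
          apply hli
          rw [hx', map_zero]
        have := congrArg b.repr.symm this
        simpa using this
      have hnsurj : b (en 0) ∉ LinearMap.range fE := by
        rw [hfE, Basis.constr_range]
        have : Set.range (fun i => b (j i)) = b '' Set.range j := by
          rw [← Set.range_comp]; rfl
        rw [this, b.self_mem_span_image]
        exact hi0
      have hfmem : fE ∈ Lbar K V W := mem_Lbar_of_trivial hWtriv fE
      obtain ⟨u, hu⟩ := H ⟨fE, hfmem⟩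
      set U : Module.End K V := ((u : Lbar K V W) : Module.End K V) with hU
      set Ui : Module.End K V := ((↑u⁻¹ : Lbar K V W) : Module.End K V) with hUi
      have hUUi : U * Ui = 1 := by
        have := congrArg Subtype.val u.mul_inv
        exact this
      have hUiU : Ui * U = 1 := by
        have := congrArg Subtype.val u.inv_mul
        exact this
      have hu' : fE * U * fE = fE := congrArg Subtype.val hu
      have hUinj : Function.Injective U := by
        intro a b' hab
        have : Ui (U a) = Ui (U b') := by rw [hab]
        rwa [← Module.End.mul_apply, ← Module.End.mul_apply, hUiU,
          Module.End.one_apply, Module.End.one_apply] at this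
      have hkey : ∀ x, U (fE x) = x := by
        intro x
        apply hfinj
        have := congrFun (congrArg DFunLike.coe hu') x
        rw [Module.End.mul_apply, Module.End.mul_apply] at this
        exact this
      have : fE (U (b (en 0))) = b (en 0) := by
        apply hUinj
        exact hkey (U (b (en 0)))
      exact hnsurj ⟨U (b (en 0)), this⟩
    exact ⟨hWtriv, hfd⟩
  · rintro ⟨hWtriv, hfd⟩ f
    obtain ⟨e, he⟩ := exists_equiv_comp (f : Module.End K V)
    refine ⟨{
        val := ⟨e.toLinearMap, mem_Lbar_of_trivial hWtriv _⟩
        inv := ⟨e.symm.toLinearMap, mem_Lbar_of_trivial hWtriv _⟩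
        val_inv := by
          apply Subtype.ext
          apply LinearMap.ext
          intro x
          simp [Module.End.mul_apply]
        inv_val := by
          apply Subtype.ext
          apply LinearMap.ext
          intro x
          simp [Module.End.mul_apply] }, ?_⟩
    apply Subtype.ext
    apply LinearMap.ext
    intro x
    exact he x
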